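/- Let g be a non-negative form of even degree d on ℝⁿ and let x ∈ S^{n-1} be a zero of g such that the Hessian of g at x is positive definite on the orthogonal complement of x. Then x is an isolated zero of the restriction of g to the unit sphere S^{n-1}. -/

import Mathlib

open MvPolynomial

noncomputable def lsub {n : ℕ} (x u : Fin n → ℝ) : Fin n → Polynomial ℝ :=
  fun i => Polynomial.C (x i) + Polynomial.C (u i) * Polynomial.X

lemma eval_lsub {n : ℕ} (x u : Fin n → ℝ) (t : ℝ) (f : MvPolynomial (Fin n) ℝ) :
    (aeval (lsub x u) f).eval t = eval (fun i => x i + t * u i) f := by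
  induction f using MvPolynomial.induction_on with
  | C a => simp [lsub]
  | add p q hp hq => simp [hp, hq]
  | mul_X p i hp =>
    simp only [map_mul, Polynomial.eval_mul, hp, lsub, Polynomial.eval_add, Polynomial.eval_C,
      Polynomial.eval_X, aeval_X, eval_mul, eval_X]
    ring

lemma deriv_lsub {n : ℕ} (x u : Fin n → ℝ) (f : MvPolynomial (Fin n) ℝ) :
    Polynomial.derivative (aeval (lsub x u) f)
      = ∑ i, Polynomial.C (u i) * aeval (lsub x u) (pderiv i f) := by
  induction f using MvPolynomial.induction_on with
  | C a => simp [pderiv_C]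
  | add p q hp hq => simp [hp, hq, mul_add, Finset.sum_add_distrib]
  | mul_X p i hp =>
    have hd : Polynomial.derivative (lsub x u i) = Polynomial.C (u i) := by
      simp [lsub]
    have hre : ∀ j : Fin n, Polynomial.C (u j) * ((aeval (lsub x u)) ((pderiv j) p) *
          lsub x u i +
          (aeval (lsub x u)) p * (aeval (lsub x u)) (Pi.single (M := fun _ => MvPolynomial (Fin n) ℝ) j 1 i))
        = Polynomial.C (u j) * (aeval (lsub x u)) ((pderiv j) p) * lsub x u i
          + (if j = i then Polynomial.C (u j) * (aeval (lsub x u)) p else 0) := by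
      intro j
      by_cases h : j = i
      · subst h
        rw [if_pos rfl, Pi.single_eq_same, map_one]
        ring
      · rw [if_neg h, Pi.single_eq_of_ne (Ne.symm h), map_zero]; ring
    simp only [map_mul, Polynomial.derivative_mul, hp, pderiv_mul, map_add, pderiv_X, aeval_X, hd]
    rw [Finset.sum_congr rfl (fun j _ => hre j), Finset.sum_add_distrib, Finset.sum_ite_eq',
      Finset.sum_mul]
    simp [mul_comm]

lemma coeff0_lsub {n : ℕ} (x u : Fin n → ℝ) (f : MvPolynomial (Fin n) ℝ) :
    (aeval (lsub x u) f).coeff 0 = eval x f := by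
  rw [Polynomial.coeff_zero_eq_eval_zero, eval_lsub]
  simp

lemma coeff1_lsub {n : ℕ} (x u : Fin n → ℝ) (f : MvPolynomial (Fin n) ℝ) :
    (aeval (lsub x u) f).coeff 1 = ∑ i, u i * eval x (pderiv i f) := by
  have h := congrArg (fun p => Polynomial.coeff p 0) (deriv_lsub x u f)
  simp only [Polynomial.coeff_derivative, Polynomial.finset_sum_coeff,
    Polynomial.coeff_C_mul, coeff0_lsub] at h
  simpa using h

lemma coeff2_lsub {n : ℕ} (x u : Fin n → ℝ) (f : MvPolynomial (Fin n) ℝ) :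
    (aeval (lsub x u) f).coeff 2 * 2 = ∑ i, ∑ j, u i * u j * eval x (pderiv j (pderiv i f)) := by
  have h := congrArg (fun p => Polynomial.coeff p 1) (deriv_lsub x u f)
  simp only [Polynomial.coeff_derivative, Polynomial.finset_sum_coeff,
    Polynomial.coeff_C_mul, coeff1_lsub] at h
  rw [show ((1:ℕ):ℝ) + 1 = 2 by norm_num] at h
  rw [h]
  rw [Finset.sum_congr rfl (fun i _ => Finset.mul_sum _ _ _)]
  exact Finset.sum_congr rfl fun i _ => Finset.sum_congr rfl fun j _ => by ring

noncomputable def phiSub {n : ℕ} (x : Fin n → ℝ) : Fin n → Polynomial (MvPolynomial (Fin n) ℝ) :=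
  fun i => Polynomial.C (MvPolynomial.C (x i)) + Polynomial.C (MvPolynomial.X i) * Polynomial.X

lemma map_phiSub {n : ℕ} (x v : Fin n → ℝ) (f : MvPolynomial (Fin n) ℝ) :
    Polynomial.map (eval v) (aeval (phiSub x) f) = aeval (lsub x v) f := by
  induction f using MvPolynomial.induction_on with
  | C a => simp [phiSub, lsub, Polynomial.map_C, algebraMap_eq]
  | add p q hp hq => simp [hp, hq]
  | mul_X p i hp => simp [hp, phiSub, lsub]

lemma coeff1_zero_of_min (p : Polynomial ℝ) (h0 : p.eval 0 = 0) (hnn : ∀ t, 0 ≤ p.eval t) :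
    p.coeff 1 = 0 := by
  have hmin : IsLocalMin (fun t => p.eval t) 0 :=
    Filter.Eventually.of_forall (fun t => by simpa [h0] using hnn t)
  have hd := hmin.deriv_eq_zero
  rw [Polynomial.deriv, ← Polynomial.coeff_zero_eq_eval_zero, Polynomial.coeff_derivative] at hd
  simpa using hd

theorem stmt17 (n d : ℕ) (hn : 2 ≤ n) (hd : 2 ≤ d) (hde : Even d)
    (g : MvPolynomial (Fin n) ℝ) (hg : g.IsHomogeneous d)
    (hnn : ∀ x : Fin n → ℝ, 0 ≤ eval x g)
    (x : Fin n → ℝ) (hx : ∑ i, x i ^ 2 = 1) (hgx : eval x g = 0)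
    (hHess : ∀ v : Fin n → ℝ, v ≠ 0 → (∑ i, v i * x i) = 0 →
      0 < ∑ i, ∑ j, eval x (pderiv i (pderiv j g)) * v i * v j) :
    ∃ ε > 0, ∀ y : Fin n → ℝ, ∑ i, y i ^ 2 = 1 → eval y g = 0 →
      Real.sqrt (∑ i, (y i - x i) ^ 2) < ε → y = x := by
  by_contra hcon
  push_neg at hcon
  have hcon' : ∀ k : ℕ, ∃ y : Fin n → ℝ, (∑ i, y i ^ 2 = 1) ∧ eval y g = 0 ∧
      Real.sqrt (∑ i, (y i - x i) ^ 2) < 1/(k+1) ∧ y ≠ x := fun k => hcon (1/(k+1)) (by positivity)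
  choose y hy1 hy2 hy3 hy4 using hcon'
  set r : ℕ → ℝ := fun k => Real.sqrt (∑ i, (y k i - x i) ^ 2) with hrdef
  have hrpos : ∀ k, 0 < r k := by
    intro k
    apply Real.sqrt_pos.mpr
    obtain ⟨i, hi⟩ := Function.ne_iff.mp (hy4 k)
    exact Finset.sum_pos' (fun j _ => sq_nonneg _)
      ⟨i, Finset.mem_univ i, lt_of_le_of_ne (sq_nonneg _)
        (Ne.symm (pow_ne_zero 2 (sub_ne_zero.mpr hi)))⟩
  have hrsq : ∀ k, r k ^ 2 = ∑ i, (y k i - x i) ^ 2 :=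
    fun k => Real.sq_sqrt (by positivity)
  set v : ℕ → Fin n → ℝ := fun k i => (y k i - x i) / r k with hvdef
  have hvs : ∀ k, ∑ i, v k i ^ 2 = 1 := by
    intro k
    have h1 : ∑ i, v k i ^ 2 = (∑ i, (y k i - x i) ^ 2) / r k ^ 2 := by
      rw [Finset.sum_div]
      exact Finset.sum_congr rfl (fun i _ => div_pow _ _ _)
    rw [h1, ← hrsq, div_self (pow_ne_zero 2 (hrpos k).ne')]
  have hy : ∀ k i, y k i = x i + r k * v k i := by
    intro k i
    have hrne : r k ≠ 0 := (hrpos k).ne'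
    rw [hvdef]
    rw [mul_div_assoc', mul_div_cancel_left₀ _ hrne]
    ring
  -- inner products
  have hips : ∀ k, ∑ i, v k i * x i = -(r k)/2 := by
    intro k
    have e1 : (∑ i, (y k i) ^ 2)
        = ∑ i, (x i ^ 2 + 2 * r k * (v k i * x i) + r k ^ 2 * v k i ^ 2) :=
      Finset.sum_congr rfl (fun i _ => by rw [hy k i]; ring)
    rw [hy1 k] at e1
    rw [Finset.sum_add_distrib, Finset.sum_add_distrib, ← Finset.mul_sum, ← Finset.mul_sum,
      hx, hvs k] at e1
    set S := ∑ i, v k i * x i with hS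
    have h2 : r k * (2 * S + r k) = 0 := by linear_combination -e1
    have h3 := (mul_eq_zero.mp h2).resolve_left (ne_of_gt (hrpos k))
    linarith
  -- compact sphere
  set Sph : Set (Fin n → ℝ) := {w | ∑ i, w i ^ 2 = 1} with hSph
  have hSphClosed : IsClosed Sph := by
    have : Continuous (fun w : Fin n → ℝ => ∑ i, w i ^ 2) :=
      continuous_finset_sum _ (fun i _ => (continuous_apply i).pow 2)
    exact isClosed_eq this continuous_const
  have hSphSub : Sph ⊆ Metric.closedBall 0 1 := by
    intro w hw
    rw [Metric.mem_closedBall, dist_zero_right]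
    rw [pi_norm_le_iff_of_nonneg zero_le_one]
    intro i
    have h1 : w i ^ 2 ≤ 1 := by
      rw [← hw]
      exact Finset.single_le_sum (f := fun j => w j ^ 2) (fun j _ => sq_nonneg _) (Finset.mem_univ i)
    rw [Real.norm_eq_abs]
    exact abs_le.mpr ⟨by nlinarith, by nlinarith⟩
  have hSphCompact : IsCompact Sph :=
    (isCompact_closedBall (0 : Fin n → ℝ) 1).of_isClosed_subset hSphClosed hSphSub
  -- coefficient machinery
  set Φg : Polynomial (MvPolynomial (Fin n) ℝ) := aeval (phiSub x) g with hΦg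
  set D : ℕ := Φg.natDegree with hD
  set N : ℕ := max (D + 1) 3 with hN
  have hDN : D < N := lt_of_lt_of_le (Nat.lt_succ_self D) (le_max_left _ _)
  have hN3 : 3 ≤ N := le_max_right _ _
  set c : ℕ → (Fin n → ℝ) → ℝ := fun m w => (aeval (lsub x w) g).coeff m with hc
  have hceq : ∀ m w, c m w = eval w (Φg.coeff m) := by
    intro m w
    simp only [hc, hΦg]
    rw [← map_phiSub x w g, Polynomial.coeff_map]
  have hdeg : ∀ w, (aeval (lsub x w) g).natDegree ≤ D := by
    intro w
    rw [← map_phiSub x w g]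
    exact Polynomial.natDegree_map_le
  -- uniform bound on coefficients over the sphere
  set F : (Fin n → ℝ) → ℝ := fun w => ∑ m ∈ Finset.range (D + 1), |eval w (Φg.coeff m)| with hF
  have hFcont : Continuous F :=
    continuous_finset_sum _ (fun m _ => (MvPolynomial.continuous_eval _).abs)
  obtain ⟨w0, hw0S, hw0max⟩ := hSphCompact.exists_isMaxOn ⟨x, hx⟩ hFcont.continuousOn
  set M : ℝ := F w0 with hM
  have hMnonneg : 0 ≤ M :=
    Finset.sum_nonneg (fun m _ => abs_nonneg _)
  have hMb : ∀ w ∈ Sph, ∀ m, |c m w| ≤ M := by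
    intro w hw m
    by_cases hm : m ≤ D
    · calc |c m w| = |eval w (Φg.coeff m)| := by rw [hceq]
        _ ≤ F w := Finset.single_le_sum (f := fun m => |eval w (Φg.coeff m)|)
            (fun m _ => abs_nonneg _) (Finset.mem_range.mpr (Nat.lt_succ_of_le hm))
        _ ≤ M := hw0max hw
    · have : c m w = 0 := by
        rw [hc]
        exact Polynomial.coeff_eq_zero_of_natDegree_lt
          (lt_of_le_of_lt (hdeg w) (not_le.mp hm))
      rw [this, abs_zero]
      exact hMnonneg
  -- values of low coefficients
  have hc0 : ∀ w : Fin n → ℝ, c 0 w = 0 := by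
    intro w
    simp only [hc]
    rw [coeff0_lsub]
    exact hgx
  have hc1 : ∀ w : Fin n → ℝ, c 1 w = 0 := by
    intro w
    simp only [hc]
    apply coeff1_zero_of_min
    · rw [eval_lsub]
      simpa using hgx
    · intro t
      rw [eval_lsub]
      exact hnn _
  set q : (Fin n → ℝ) → ℝ := fun w => ∑ i, ∑ j, eval x (pderiv i (pderiv j g)) * w i * w j
    with hq
  have hq2 : ∀ w, q w = 2 * c 2 w := by
    intro w
    have h2 := coeff2_lsub x w g
    calc q w = ∑ i, ∑ j, eval x (pderiv i (pderiv j g)) * w i * w j := rfl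
      _ = ∑ j, ∑ i, eval x (pderiv i (pderiv j g)) * w i * w j := Finset.sum_comm
      _ = ∑ i, ∑ j, w i * w j * eval x (pderiv j (pderiv i g)) :=
          Finset.sum_congr rfl (fun a _ => Finset.sum_congr rfl (fun b _ => by ring))
      _ = (aeval (lsub x w) g).coeff 2 * 2 := h2.symm
      _ = 2 * c 2 w := by rw [hc]; ring
  have hq_cont : Continuous q := by
    apply continuous_finset_sum
    intro i _
    apply continuous_finset_sum
    intro j _
    exact (continuous_const.mul (continuous_apply i)).mul (continuous_apply j)
  -- the key coefficient bound along the sequence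
  have hbound : ∀ k, |c 2 (v k)| ≤ (N : ℝ) * M * r k := by
    intro k
    have hvS : v k ∈ Sph := hvs k
    have hrk1 : r k ≤ 1 := by
      have h0 := hy3 k
      have h1 : (1:ℝ)/(k+1) ≤ 1 := by
        rw [div_le_one (by positivity)]
        linarith [Nat.cast_nonneg (α := ℝ) k]
      exact le_trans (le_of_lt h0) h1
    have hev : Polynomial.eval (r k) (aeval (lsub x (v k)) g) = 0 := by
      rw [eval_lsub]
      have he : (fun i => x i + r k * v k i) = y k := funext (fun i => (hy k i).symm)
      rw [he]
      exact hy2 k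
    have hexp : ∑ m ∈ Finset.range N, c m (v k) * r k ^ m = 0 := by
      rw [← hev, Polynomial.eval_eq_sum_range' (lt_of_le_of_lt (hdeg (v k)) hDN)]
    have hsplit : ∑ m ∈ Finset.range 3, c m (v k) * r k ^ m
        + ∑ m ∈ Finset.Ico 3 N, c m (v k) * r k ^ m = 0 := by
      rw [← hexp, Finset.range_eq_Ico, Finset.range_eq_Ico]
      exact Finset.sum_Ico_consecutive (fun m => c m (v k) * r k ^ m) (Nat.zero_le 3) hN3
    have h3 : ∑ m ∈ Finset.range 3, c m (v k) * r k ^ m = c 2 (v k) * r k ^ 2 := by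
      rw [Finset.sum_range_succ, Finset.sum_range_succ, Finset.sum_range_one, hc0, hc1]
      ring
    have hkey : c 2 (v k) * r k ^ 2 = - ∑ m ∈ Finset.Ico 3 N, c m (v k) * r k ^ m := by
      rw [← h3]
      linarith [hsplit]
    have habs : |c 2 (v k)| * r k ^ 2 ≤ (N:ℝ) * M * r k * r k ^ 2 := by
      rw [show |c 2 (v k)| * r k ^ 2 = |c 2 (v k) * r k ^ 2| by
        rw [abs_mul, abs_of_nonneg (pow_nonneg (hrpos k).le 2)]]
      rw [hkey, abs_neg]
      calc |∑ m ∈ Finset.Ico 3 N, c m (v k) * r k ^ m|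
          ≤ ∑ m ∈ Finset.Ico 3 N, |c m (v k) * r k ^ m| := Finset.abs_sum_le_sum_abs _ _
        _ ≤ ∑ _m ∈ Finset.Ico 3 N, M * r k ^ 3 := by
            apply Finset.sum_le_sum
            intro m hm
            rw [abs_mul, abs_of_nonneg (pow_nonneg (hrpos k).le m)]
            have h1 : r k ^ m ≤ r k ^ 3 :=
              pow_le_pow_of_le_one (hrpos k).le hrk1 (Finset.mem_Ico.mp hm).1
            exact mul_le_mul (hMb _ hvS m) h1 (pow_nonneg (hrpos k).le m) hMnonneg
        _ = (Finset.Ico 3 N).card * (M * r k ^ 3) := by rw [Finset.sum_const, nsmul_eq_mul]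
        _ ≤ (N:ℝ) * (M * r k ^ 3) := by
            apply mul_le_mul_of_nonneg_right _
              (mul_nonneg hMnonneg (pow_nonneg (hrpos k).le 3))
            have : (Finset.Ico 3 N).card ≤ N := by
              rw [Nat.card_Ico]
              exact Nat.sub_le N 3
            exact_mod_cast this
        _ = (N:ℝ) * M * r k * r k ^ 2 := by ring
    exact le_of_mul_le_mul_right habs (pow_pos (hrpos k) 2)
  -- pass to a convergent subsequence
  obtain ⟨vl, hvlS, φ, hφmono, hconv⟩ := hSphCompact.tendsto_subseq (fun k => hvs k)
  have hr0 : Filter.Tendsto r Filter.atTop (nhds 0) := by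
    apply squeeze_zero (fun k => (hrpos k).le) (fun k => (hy3 k).le)
    exact tendsto_one_div_add_atTop_nhds_zero_nat
  have hrφ : Filter.Tendsto (fun k => r (φ k)) Filter.atTop (nhds 0) :=
    hr0.comp hφmono.tendsto_atTop
  have hip_cont : Continuous (fun w : Fin n → ℝ => ∑ i, w i * x i) :=
    continuous_finset_sum _ (fun i _ => (continuous_apply i).mul continuous_const)
  have hipl : Filter.Tendsto (fun k => ∑ i, v (φ k) i * x i) Filter.atTop
      (nhds (∑ i, vl i * x i)) := (hip_cont.tendsto vl).comp hconv
  have hipl0 : Filter.Tendsto (fun k => ∑ i, v (φ k) i * x i) Filter.atTop (nhds 0) := by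
    have he : (fun k => ∑ i, v (φ k) i * x i) = fun k => -(r (φ k))/2 :=
      funext (fun k => hips (φ k))
    rw [he]
    have := (hrφ.neg).div_const 2
    simpa using this
  have horth : ∑ i, vl i * x i = 0 := tendsto_nhds_unique hipl hipl0
  have hvl0 : vl ≠ 0 := by
    intro h
    have h1 : ∑ i, vl i ^ 2 = 1 := hvlS
    rw [h] at h1
    simp at h1
  have hqconv : Filter.Tendsto (fun k => q (v (φ k))) Filter.atTop (nhds (q vl)) :=
    (hq_cont.tendsto vl).comp hconv
  have hqabs : Filter.Tendsto (fun k => |q (v (φ k))|) Filter.atTop (nhds |q vl|) := hqconv.abs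
  have hbφ : Filter.Tendsto (fun k => 2 * ((N:ℝ) * M * r (φ k))) Filter.atTop (nhds 0) := by
    have h := hrφ.const_mul (2 * ((N:ℝ) * M))
    simp only [mul_zero] at h
    convert h using 2 with k
    ring
  have hle : |q vl| ≤ 0 := by
    apply le_of_tendsto_of_tendsto' hqabs hbφ
    intro k
    calc |q (v (φ k))| = |2 * c 2 (v (φ k))| := by rw [hq2]
      _ = 2 * |c 2 (v (φ k))| := by rw [abs_mul, abs_two]
      _ ≤ 2 * ((N:ℝ) * M * r (φ k)) := by linarith [hbound (φ k)]
  have hq0 : q vl = 0 := abs_eq_zero.mp (le_antisymm hle (abs_nonneg _))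
  have hpos : 0 < q vl := by
    simp only [hq]
    exact hHess vl hvl0 horth
  linarith
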